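/- Let F = [[0,−1],[1,0]], let a : ℕ → ℝ² with ∑_{x≥0}‖a(x)‖² < ∞, let (S_x) be 2×2 real matrices with a(x+1) = S_x a(x), and let C be a constant 2×2 real matrix with S_yᵀ F S_x − F = (x−y)·C for all x ≠ y. Write K(x,y) = ⟨F a(x), a(y)⟩/(x−y) for x ≠ y. Then K satisfies the discrete Lyapunov-type identity K(x+1,y+1) − K(x,y) = ⟨C a(x), a(y)⟩ for all x, y ∈ ℕ with x+1 ≠ y+1 and x ≠ y. -/

import Mathlib

open Matrix

/-- The key Lyapunov-type computation: if `a(x+1) = S_x a(x)` and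
`S_yᵀ F S_x − F = (x−y)·C`, then the Tracy–Widom kernel
`K(x,y) = ⟨F a(x), a(y)⟩/(x−y)` satisfies
`K(x+1,y+1) − K(x,y) = ⟨C a(x), a(y)⟩` for `x ≠ y`. -/
theorem stmt_19 (a : ℕ → Fin 2 → ℝ)
    (ha : Summable fun x : ℕ => (a x 0) ^ 2 + (a x 1) ^ 2)
    (S : ℕ → Matrix (Fin 2) (Fin 2) ℝ)
    (hS : ∀ x : ℕ, a (x + 1) = (S x).mulVec (a x))
    (C : Matrix (Fin 2) (Fin 2) ℝ)
    (hC : ∀ x y : ℕ, x ≠ y →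
      (S y)ᵀ * !![(0 : ℝ), -1; 1, 0] * (S x) - !![(0 : ℝ), -1; 1, 0]
        = ((x : ℝ) - (y : ℝ)) • C)
    (K : ℕ → ℕ → ℝ)
    (hK : ∀ x y : ℕ, x ≠ y →
      K x y = dotProduct ((!![(0 : ℝ), -1; 1, 0]).mulVec (a x)) (a y) / ((x : ℝ) - y)) :
    ∀ x y : ℕ, x ≠ y →
      K (x + 1) (y + 1) - K x y = dotProduct (C.mulVec (a x)) (a y) := by
  intro x y hxy
  have hne : (x : ℝ) - y ≠ 0 := by
    have : (x : ℝ) ≠ y := by exact_mod_cast hxy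
    intro h; apply this; linarith
  have ne2 : x + 1 ≠ y + 1 := by omega
  rw [hK _ _ ne2, hK _ _ hxy, hS, hS]
  have hCxy := hC x y hxy
  have hcast : ((x + 1 : ℕ) : ℝ) - ((y + 1 : ℕ) : ℝ) = (x : ℝ) - y := by push_cast; ring
  rw [hcast]
  have key : dotProduct ((!![(0 : ℝ), -1; 1, 0]).mulVec ((S x).mulVec (a x)))
      ((S y).mulVec (a y)) -
      dotProduct ((!![(0 : ℝ), -1; 1, 0]).mulVec (a x)) (a y)
      = ((x : ℝ) - y) * dotProduct (C.mulVec (a x)) (a y) := by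
    have h1 : dotProduct ((!![(0 : ℝ), -1; 1, 0]).mulVec ((S x).mulVec (a x)))
        ((S y).mulVec (a y))
        = dotProduct ((((S y)ᵀ * !![(0 : ℝ), -1; 1, 0] * (S x))).mulVec (a x)) (a y) := by
      simp [Matrix.mulVec, Matrix.mul_apply, dotProduct, Fin.sum_univ_two,
        Matrix.transpose_apply]
      ring
    rw [h1]
    have h2 : ((S y)ᵀ * !![(0 : ℝ), -1; 1, 0] * (S x))
        = ((x : ℝ) - y) • C + !![(0 : ℝ), -1; 1, 0] := by
      rw [← hCxy]; ring_nf; abel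
    rw [h2, Matrix.add_mulVec, add_dotProduct, Matrix.smul_mulVec,
      smul_dotProduct, smul_eq_mul]
    ring
  rw [div_sub_div_same, key]
  field_simp
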